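/- arXiv:1303.3301 — 2 statements merged into one kernel-verified Lean document; each statement's English description precedes it below -/
import Mathlib

section
/- Let n, s be positive integers with s ≤ n. Then the maximum of min{(n−q)/p, (n−p)/q} over all integer pairs (p,q) with 1 ≤ p,q ≤ n and p + q ≥ n + s equals ⌊(n−s)/2⌋ / (⌊(n−s)/2⌋ + s). -/
lemma aux_mono (s a b : ℕ) (hs : 1 ≤ s) (hab : a ≤ b) :
    (a : ℝ) / (a + s) ≤ (b : ℝ) / (b + s) := by
  have hs' : (1:ℝ) ≤ s := by exact_mod_cast hs
  have hab' : (a:ℝ) ≤ b := by exact_mod_cast hab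
  have ha : (0:ℝ) ≤ a := by positivity
  rw [div_le_div_iff₀ (by linarith) (by linarith)]
  nlinarith

lemma aux_bound (n s : ℕ) (hs : 1 ≤ s) (p q : ℕ) (hp1 : 1 ≤ p) (hpn : p ≤ n)
    (hq1 : 1 ≤ q) (hqn : q ≤ n) (hpq : n + s ≤ p + q) (hqp : q ≤ p) :
    ((n : ℝ) - p) / q ≤ (((n - s) / 2 : ℕ) : ℝ) / ((((n - s) / 2 : ℕ) : ℝ) + s) := by
  set k := (n - s) / 2 with hk
  set a := n - p with ha
  have hak : a ≤ k := by
    apply Nat.le_div_iff_mul_le (by norm_num) |>.mpr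
    omega
  have hqa : a + s ≤ q := by omega
  have hcast : ((n : ℝ) - p) = a := by
    have : (a : ℝ) = (n : ℕ) - (p:ℕ) := by
      push_cast [ha]
      rw [Nat.cast_sub hpn]
    simp [this]
  rw [hcast]
  have h1 : (a : ℝ) / q ≤ (a : ℝ) / (a + s) := by
    apply div_le_div_of_nonneg_left (by positivity) (by positivity)
    exact_mod_cast hqa
  refine h1.trans ?_
  exact_mod_cast aux_mono s a k hs hak

/-- The maximum of `min{(n−q)/p, (n−p)/q}` over integer pairs `(p,q)` with
`1 ≤ p, q ≤ n` and `p + q ≥ n + s` equals `⌊(n−s)/2⌋/(⌊(n−s)/2⌋+s)`. -/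
theorem stmt3 (n s : ℕ) (hn : 1 ≤ n) (hs : 1 ≤ s) (hsn : s ≤ n) :
    IsGreatest
      {x : ℝ | ∃ p q : ℕ, 1 ≤ p ∧ p ≤ n ∧ 1 ≤ q ∧ q ≤ n ∧ n + s ≤ p + q ∧
        x = min (((n : ℝ) - q) / p) (((n : ℝ) - p) / q)}
      ((((n - s) / 2 : ℕ) : ℝ) / ((((n - s) / 2 : ℕ) : ℝ) + s)) := by
  set k := (n - s) / 2 with hk
  have hkn : 2 * k + s ≤ n := by omega
  constructor
  · refine ⟨n - k, k + s, by omega, by omega, by omega, by omega, by omega, ?_⟩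
    have h1 : ((n : ℝ) - (k + s : ℕ)) = (n - k - s : ℕ) := by
      push_cast
      rw [Nat.cast_sub (by omega), Nat.cast_sub (by omega)]
      push_cast; ring
    have h2 : ((n - k : ℕ) : ℝ) = (n : ℝ) - k := by
      rw [Nat.cast_sub (by omega)]
    have h3 : ((n : ℝ) - (n - k : ℕ)) = k := by rw [h2]; ring
    rw [h1, h3]
    rw [min_eq_right]
    · norm_num
    · -- k/(k+s) ≤ (n-k-s)/(n-k)
      have hr : n - k - s = k + (n - s - 2*k) := by omega
      have hr2 : n - s - 2*k ≤ 1 := by omega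
      rw [h2, hr]
      set r := n - s - 2*k
      have hn2 : (n:ℝ) - k = k + r + s := by
        have : n = 2*k + r + s := by omega
        rw [this]; push_cast; ring
      rw [hn2]
      push_cast
      rw [div_le_div_iff₀ (by positivity) (by positivity)]
      have : (0:ℝ) ≤ r := by positivity
      have : (1:ℝ) ≤ s := by exact_mod_cast hs
      nlinarith
  · rintro x ⟨p, q, hp1, hpn, hq1, hqn, hpq, rfl⟩
    rcases le_total q p with h | h
    · exact (min_le_right _ _).trans (aux_bound n s hs p q hp1 hpn hq1 hqn hpq h)
    · exact (min_le_left _ _).trans (aux_bound n s hs q p hq1 hqn hp1 hpn (by omega) h)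
end

section
/- Let u be a (p,q)-form on ℂⁿ (an alternating tensor with p holomorphic and q antiholomorphic indices), and let (φ_{i\bar j}) be Hermitian positive with eigenvalues λ₁ ≤ … ≤ λₙ. Define T(u,u) = ⟨[φ, Λ_ω]u, u⟩ where Λ_ω is the contraction with the standard Kähler form of ℂⁿ. Then T(u,u) ≥ max{pλ₁ − (n−q)λₙ, qλ₁ − (n−p)λₙ}·|u|². In coordinates diagonalizing φ with eigenvalues λ₁,…,λₙ, this reads: for any family (u_{I\bar{J}}) alternating in I = (i₁<…<i_p) and J = (j₁<…<j_q), ∑_{I,J} (∑_{i∈I} λ_i + ∑_{j∈J} λ_j − ∑_{i=1}^n λ_i) |u_{I\bar J}|² ≥ max{pλ₁ − (n−q)λₙ, qλ₁ − (n−p)λₙ} · ∑_{I,J}|u_{I\bar J}|². -/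
open Finset

lemma sum_lower (n k : ℕ) (hn : 0 < n) (lam : Fin n → ℝ) (hmono : Monotone lam)
    (S : Finset (Fin n)) (hS : S.card = k) :
    (k : ℝ) * lam ⟨0, hn⟩ ≤ ∑ i ∈ S, lam i := by
  have := Finset.card_nsmul_le_sum S lam (lam ⟨0, hn⟩)
    (fun x _ => hmono (Fin.mk_le_of_le_val (Nat.zero_le _)))
  simpa [hS, nsmul_eq_mul] using this

lemma sum_upper (n k : ℕ) (hn : 0 < n) (lam : Fin n → ℝ) (hmono : Monotone lam)
    (S : Finset (Fin n)) (hS : S.card = k) :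
    (∑ i, lam i) - ∑ i ∈ S, lam i ≤ ((n : ℝ) - k) * lam ⟨n - 1, by omega⟩ := by
  have hk : k ≤ n := by rw [← hS]; simpa using Finset.card_le_card (Finset.subset_univ S)
  have h1 : (∑ i, lam i) - ∑ i ∈ S, lam i = ∑ i ∈ Sᶜ, lam i := by
    rw [eq_comm, eq_sub_iff_add_eq, Finset.sum_compl_add_sum]
  have h2 : Sᶜ.card = n - k := by simp [Finset.card_compl, hS]
  have h3 := Finset.sum_le_card_nsmul Sᶜ lam (lam ⟨n - 1, by omega⟩)
    (fun x _ => hmono (by omega : x.val ≤ n - 1))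
  rw [h1]
  have : ((n - k : ℕ) : ℝ) = (n : ℝ) - k := by push_cast [hk]; ring
  calc ∑ i ∈ Sᶜ, lam i ≤ (n - k : ℕ) • lam ⟨n - 1, by omega⟩ := by rwa [h2] at h3
    _ = ((n : ℝ) - k) * lam ⟨n - 1, by omega⟩ := by rw [nsmul_eq_mul, this]

/-- Coordinate version of the curvature estimate for the operator `[φ, Λ_ω]`:
for real eigenvalues `0 ≤ λ₁ ≤ … ≤ λₙ` (given by a monotone function `lam`) and any
family of complex coefficients `u I J` indexed by `p`-element subsets `I` and
`q`-element subsets `J` of `{1,…,n}`,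
`∑_{I,J} (∑_{i∈I} λ_i + ∑_{j∈J} λ_j − ∑_i λ_i) |u_{IJ̄}|²
  ≥ max{pλ₁ − (n−q)λₙ, qλ₁ − (n−p)λₙ} ∑_{I,J} |u_{IJ̄}|²`. -/
theorem stmt12 (n p q : ℕ) (hn : 0 < n) (hp : p ≤ n) (hq : q ≤ n)
    (lam : Fin n → ℝ) (hmono : Monotone lam) (h0 : 0 ≤ lam ⟨0, hn⟩)
    (u : Finset (Fin n) → Finset (Fin n) → ℂ) :
    ∑ I ∈ Finset.univ.powersetCard p, ∑ J ∈ Finset.univ.powersetCard q,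
        ((∑ i ∈ I, lam i) + (∑ j ∈ J, lam j) - ∑ i, lam i) * ‖u I J‖ ^ 2 ≥
      max ((p : ℝ) * lam ⟨0, hn⟩ - ((n : ℝ) - q) * lam ⟨n - 1, by omega⟩)
          ((q : ℝ) * lam ⟨0, hn⟩ - ((n : ℝ) - p) * lam ⟨n - 1, by omega⟩) *
        ∑ I ∈ Finset.univ.powersetCard p, ∑ J ∈ Finset.univ.powersetCard q,
          ‖u I J‖ ^ 2 := by
  rw [ge_iff_le, Finset.mul_sum]
  apply Finset.sum_le_sum
  intro I hI
  rw [Finset.mul_sum]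
  apply Finset.sum_le_sum
  intro J hJ
  simp only [Finset.mem_powersetCard] at hI hJ
  apply mul_le_mul_of_nonneg_right _ (by positivity)
  apply max_le
  · have h1 := sum_lower n p hn lam hmono I hI.2
    have h2 := sum_upper n q hn lam hmono J hJ.2
    linarith
  · have h1 := sum_lower n q hn lam hmono J hJ.2
    have h2 := sum_upper n p hn lam hmono I hI.2
    linarith
end
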